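/- Any two admissible mirror factors of a circular word W have distinct centers; consequently, W has at most 2|W| admissible factors. -/

import Mathlib

inductive Letter | u | d | l | r
deriving DecidableEq, Repr

def Letter.comp : Letter → Letter
  | .u => .d
  | .d => .u
  | .l => .r
  | .r => .l

/-- The backtrack of a word: the letterwise complement of the reverse. -/
def backtrack (W : List Letter) : List Letter := W.reverse.map Letter.comp

/-- `X` is a mirror factor of the circular word `W`: some rotation of `W`
factors as `X U X̂ V` with `|U| = |V|`. -/
def MirrorFactor (W X : List Letter) : Prop :=
  ∃ n U V, W.rotate n = X ++ U ++ backtrack X ++ V ∧ U.length = V.length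

/-- A mirror occurrence of `X` in the circular word `W` starting at position `n`. -/
def MirrorOcc (W : List Letter) (n : ℕ) (X : List Letter) : Prop :=
  ∃ U V, W.rotate n = X ++ U ++ backtrack X ++ V ∧ U.length = V.length

/-- An admissible occurrence: a mirror occurrence where `U[1] ≠ comp U[-1]`
and `V[1] ≠ comp V[-1]`. -/
def AdmissibleOcc (W : List Letter) (n : ℕ) (X : List Letter) : Prop :=
  ∃ U V, W.rotate n = X ++ U ++ backtrack X ++ V ∧ U.length = V.length ∧
    (∀ a b, U.head? = some a → U.getLast? = some b → a ≠ Letter.comp b) ∧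
    (∀ a b, V.head? = some a → V.getLast? = some b → a ≠ Letter.comp b)

namespace AdmAux

lemma comp_comp (a : Letter) : a.comp.comp = a := by cases a <;> rfl

/-- circular letter access -/
def f (W : List Letter) (p : ℕ) : Letter := W.getD (p % W.length) Letter.u

lemma f_congr (W : List Letter) {p q : ℕ} (h : p % W.length = q % W.length) :
    f W p = f W q := by unfold f; rw [h]

lemma rot_getD (W : List Letter) (hW : W ≠ []) (n i : ℕ) (hi : i < W.length) :
    (W.rotate n).getD i Letter.u = f W (i + n) := by
  have hpos : 0 < W.length := List.length_pos_iff_ne_nil.mpr hW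
  rw [List.getD_eq_getElem _ _ (by rw [List.length_rotate]; exact hi),
    List.getElem_rotate]
  unfold f
  rw [List.getD_eq_getElem _ _ (Nat.mod_lt _ hpos)]

lemma head?_getD {l : List Letter} (h : l ≠ []) : l.head? = some (l.getD 0 Letter.u) := by
  rw [List.head?_eq_head h, List.getD_eq_getElem _ _ (List.length_pos_iff_ne_nil.mpr h)]
  rw [List.head_eq_getElem]

lemma getLast?_getD {l : List Letter} (h : l ≠ []) :
    l.getLast? = some (l.getD (l.length - 1) Letter.u) := by
  rw [List.getLast?_eq_getLast h, List.getD_eq_getElem _ _ (by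
    have := List.length_pos_iff_ne_nil.mpr h; omega)]
  rw [List.getLast_eq_getElem]

lemma backtrack_getD {X : List Letter} {i : ℕ} (hi : i < X.length) :
    (backtrack X).getD i Letter.u = Letter.comp (X.getD (X.length - 1 - i) Letter.u) := by
  have h1 : i < (backtrack X).length := by simp [backtrack]; omega
  have h2 : X.length - 1 - i < X.length := by omega
  rw [List.getD_eq_getElem _ _ h1, List.getD_eq_getElem _ _ h2]
  simp only [backtrack]
  rw [List.getElem_map, List.getElem_reverse]

lemma occ_facts {W : List Letter} (hW : W ≠ []) {n : ℕ} {X U V : List Letter}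
    (hrot : W.rotate n = X ++ U ++ backtrack X ++ V) (hlen : U.length = V.length) :
    W.length = 2 * X.length + 2 * U.length ∧
    (∀ i < X.length,
      f W (n + i) =
        Letter.comp (f W (n + X.length + U.length + (X.length - 1 - i)))) ∧
    (∀ j < U.length, U.getD j Letter.u = f W (n + X.length + j)) ∧
    (∀ j < V.length, V.getD j Letter.u = f W (n + 2 * X.length + U.length + j)) := by
  set k := X.length with hk
  set u := U.length with hu
  have hbk : (backtrack X).length = k := by simp [backtrack]; rfl
  have hL : W.length = 2 * k + 2 * u := by
    have := congrArg List.length hrot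
    simp only [List.length_rotate, List.length_append, hbk] at this
    omega
  have hrot' : W.rotate n = X ++ (U ++ (backtrack X ++ V)) := by
    rw [hrot]; simp [List.append_assoc]
  -- pointwise access to rotate as f
  have hX : ∀ i < k, X.getD i Letter.u = f W (n + i) := by
    intro i hi
    have : (W.rotate n).getD i Letter.u = X.getD i Letter.u := by
      rw [hrot', List.getD_append _ _ _ _ (by omega)]
    rw [← this, rot_getD W hW n i (by omega), Nat.add_comm]
  have hBX : ∀ i < k, (backtrack X).getD i Letter.u = f W (n + k + u + i) := by
    intro i hi
    have h1 : (W.rotate n).getD (k + u + i) Letter.u = (backtrack X).getD i Letter.u := by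
      rw [hrot', List.getD_append_right _ _ _ _ (by omega),
        List.getD_append_right _ _ _ _ (by rw [← hu]; omega),
        List.getD_append _ _ _ _ (by rw [hbk]; rw [← hu]; omega)]
      congr 1
      omega
    rw [← h1, rot_getD W hW n _ (by omega)]
    congr 1
    omega
  refine ⟨hL, ?_, ?_, ?_⟩
  · intro i hi
    have h1 := hBX (k - 1 - i) (by omega)
    rw [backtrack_getD (by omega)] at h1
    have h2 : k - 1 - (k - 1 - i) = i := by omega
    rw [h2] at h1
    have h3 := hX i hi
    rw [← h1, comp_comp]
    exact h3.symm
  · intro j hj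
    have : (W.rotate n).getD (k + j) Letter.u = U.getD j Letter.u := by
      rw [hrot', List.getD_append_right _ _ _ _ (by omega),
        List.getD_append _ _ _ _ (by rw [← hu]; omega)]
      congr 1
      omega
    rw [← this, rot_getD W hW n _ (by omega)]
    congr 1
    omega
  · intro j hj
    have : (W.rotate n).getD (2 * k + u + j) Letter.u = V.getD j Letter.u := by
      rw [hrot', List.getD_append_right _ _ _ _ (by omega),
        List.getD_append_right _ _ _ _ (by rw [← hu]; omega),
        List.getD_append_right _ _ _ _ (by rw [hbk]; rw [← hu]; omega)]
      congr 1
      rw [hbk, ← hu]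
      omega
    rw [← this, rot_getD W hW n _ (by omega)]
    congr 1
    omega

/-- Core impossibility: two admissible occurrences with equal centers and
`|X'| < |X|` is impossible. -/
lemma core {W : List Letter} (hW : W ≠ []) {n n' : ℕ} {X X' : List Letter}
    (h1 : AdmissibleOcc W n X) (h2 : AdmissibleOcc W n' X')
    (hc : (2 * n + X.length) % (2 * W.length) = (2 * n' + X'.length) % (2 * W.length))
    (hk : X'.length < X.length) : False := by
  obtain ⟨U, V, hrot, hlen, _, _⟩ := h1
  obtain ⟨U', V', hrot', hlen', _, hadmV'⟩ := h2
  obtain ⟨hL, hM, -, -⟩ := occ_facts hW hrot hlen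
  obtain ⟨hL', -, -, hV'⟩ := occ_facts hW hrot' hlen'
  set L := W.length with hLdef
  set k := X.length with hkdef
  set u := U.length with hudef
  set k' := X'.length with hk'def
  set u' := U'.length with hu'def
  -- parity of k, k'
  have hmod2 : (2 * n + k) % 2 = (2 * n' + k') % 2 := by
    have h2dvd : (2 : ℕ) ∣ 2 * L := ⟨L, rfl⟩
    exact Nat.ModEq.of_dvd h2dvd hc
  obtain ⟨d, hd⟩ : ∃ d, k = k' + 2 * d ∧ 1 ≤ d := by
    refine ⟨(k - k') / 2, ?_, ?_⟩ <;> omega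
  obtain ⟨hdk, hd1⟩ := hd
  have hu' : u' = u + 2 * d := by omega
  have hV'len : V'.length = u' := hlen'.symm
  -- (n + d) ≡ n' [MOD L]
  have hnd : (n + d) % L = n' % L := by
    have e1 : (2 * (n + d) + k') % (2 * L) = (2 * n' + k') % (2 * L) := by
      have : 2 * (n + d) + k' = 2 * n + k := by omega
      rw [this]; exact hc
    have e2 : 2 * (n + d) ≡ 2 * n' [MOD 2 * L] := Nat.ModEq.add_right_cancel' k' e1
    exact Nat.ModEq.mul_left_cancel' two_ne_zero e2
  -- mirror fact of the big occurrence at i = d - 1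
  have hm := hM (d - 1) (by omega)
  have idx1 : n + (d - 1) = n + d - 1 := by omega
  have idx2 : n + k + u + (k - 1 - (d - 1)) = (n + d) + (2 * k' + u') := by omega
  rw [idx1, idx2] at hm
  -- admissibility of V'
  have hV'ne : V' ≠ [] := by
    intro h; rw [h] at hV'len; simp at hV'len; omega
  have hhead := head?_getD hV'ne
  have hlast := getLast?_getD hV'ne
  have hadm := hadmV' _ _ hhead hlast
  rw [hV' 0 (by omega), hV' (V'.length - 1) (by omega)] at hadm
  have idx3 : n' + 2 * k' + u' + 0 = n' + (2 * k' + u') := by omega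
  have idx4 : n' + 2 * k' + u' + (V'.length - 1) = n' + (L - 1) := by
    rw [hV'len]; omega
  rw [idx3, idx4] at hadm
  -- transfer via congruence
  have c1 : f W (n' + (2 * k' + u')) = f W ((n + d) + (2 * k' + u')) := by
    apply f_congr
    have : (n + d) + (2 * k' + u') ≡ n' + (2 * k' + u') [MOD L] :=
      Nat.ModEq.add_right _ hnd
    exact this.symm
  have c2 : f W (n' + (L - 1)) = f W (n + d - 1) := by
    apply f_congr
    have hLpos : 0 < L := List.length_pos_iff_ne_nil.mpr hW
    have e1 : (n + d) + (L - 1) ≡ n' + (L - 1) [MOD L] := Nat.ModEq.add_right _ hnd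
    have e2 : (n + d) + (L - 1) = (n + d - 1) + L := by omega
    have e3 : ((n + d - 1) + L) % L = (n + d - 1) % L := Nat.add_mod_right _ _
    calc (n' + (L - 1)) % L = ((n + d) + (L - 1)) % L := e1.symm
      _ = (n + d - 1) % L := by rw [e2, e3]
  rw [c1, c2, hm, comp_comp] at hadm
  exact hadm rfl

lemma take_eq {W : List Letter} {n : ℕ} {X U V : List Letter}
    (hrot : W.rotate n = X ++ U ++ backtrack X ++ V) :
    X = (W.rotate n).take X.length := by
  rw [hrot]
  rw [List.append_assoc, List.append_assoc, List.take_left']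
  rfl

end AdmAux

theorem admissible_distinct_centers (W : List Letter) (hW : W ≠ []) :
    (∀ n n' X X', n < W.length → n' < W.length →
      AdmissibleOcc W n X → AdmissibleOcc W n' X' →
      (2 * n + X.length) % (2 * W.length) = (2 * n' + X'.length) % (2 * W.length) →
      n = n' ∧ X = X') ∧
    {p : ℕ × List Letter | p.1 < W.length ∧ AdmissibleOcc W p.1 p.2}.ncard
      ≤ 2 * W.length := by
  have hLpos : 0 < W.length := List.length_pos_iff_ne_nil.mpr hW
  have main : ∀ n n' X X', n < W.length → n' < W.length →
      AdmissibleOcc W n X → AdmissibleOcc W n' X' →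
      (2 * n + X.length) % (2 * W.length) = (2 * n' + X'.length) % (2 * W.length) →
      n = n' ∧ X = X' := by
    intro n n' X X' hn hn' h1 h2 hc
    rcases lt_trichotomy X'.length X.length with hlt | heq | hgt
    · exact absurd (AdmAux.core hW h1 h2 hc hlt) (by simp)
    · -- equal lengths
      have hnn' : n = n' := by
        have e1 : 2 * n + X.length ≡ 2 * n' + X.length [MOD 2 * W.length] := by
          rw [heq] at hc; exact hc
        have e2 : 2 * n ≡ 2 * n' [MOD 2 * W.length] :=
          Nat.ModEq.add_right_cancel' _ e1
        have e3 : n ≡ n' [MOD W.length] :=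
          Nat.ModEq.mul_left_cancel' two_ne_zero e2
        rwa [Nat.ModEq, Nat.mod_eq_of_lt hn, Nat.mod_eq_of_lt hn'] at e3
      obtain ⟨U, V, hrot, -⟩ := h1
      obtain ⟨U', V', hrot', -⟩ := h2
      have hX := AdmAux.take_eq hrot
      have hX' := AdmAux.take_eq hrot'
      refine ⟨hnn', ?_⟩
      rw [hX, hX', hnn', heq]
    · exact absurd (AdmAux.core hW h2 h1 hc.symm hgt) (by simp)
  refine ⟨main, ?_⟩
  set S := {p : ℕ × List Letter | p.1 < W.length ∧ AdmissibleOcc W p.1 p.2} with hS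
  set g : ℕ × List Letter → ℕ := fun p => (2 * p.1 + p.2.length) % (2 * W.length)
    with hg
  have hinj : Set.InjOn g S := by
    intro p hp q hq hpq
    obtain ⟨h1, h2⟩ := main p.1 q.1 p.2 q.2 hp.1 hq.1 hp.2 hq.2 hpq
    exact Prod.ext h1 h2
  have hsub : g '' S ⊆ (Finset.range (2 * W.length) : Set ℕ) := by
    rintro x ⟨p, -, rfl⟩
    simp only [Finset.coe_range, Set.mem_Iio]
    exact Nat.mod_lt _ (by omega)
  calc S.ncard = (g '' S).ncard := (Set.ncard_image_of_injOn hinj).symm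
    _ ≤ (Finset.range (2 * W.length) : Set ℕ).ncard :=
        Set.ncard_le_ncard hsub (Finset.finite_toSet _)
    _ = 2 * W.length := by rw [Set.ncard_coe_finset, Finset.card_range]
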